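/- For every fixed τ ∈ ℝ, C₁₂(Δ,τ) → 0 as Δ → 0, and C₁₁(Δ,τ) → (2ν₁/(1−‖h‖_{L¹}‖g‖_{L¹})) · 1_{{τ=0}} as Δ → 0 (this is the Epps effect). -/

import Mathlib

open MeasureTheory Set Filter Topology

noncomputable section

/-- Convolution of two functions on `ℝ` (w.r.t. Lebesgue measure). -/
def conv (f g : ℝ → ℝ) (t : ℝ) : ℝ := ∫ s, f (t - s) * g s

/-- `convPow f n = f^{⋆(n+1)}`, the `(n+1)`-fold convolution power of `f`. -/
def convPow (f : ℝ → ℝ) : ℕ → ℝ → ℝ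
  | 0 => f
  | n + 1 => conv f (convPow f n)

/-- `F = Σ_{n ≥ 1} (h⋆g)^{⋆n}`. -/
def Ffun (h g : ℝ → ℝ) (t : ℝ) : ℝ := ∑' n, convPow (conv h g) n t

/-- `ν₁ = μ₁ + ‖h‖_{L¹} μ₃`. -/
def nu1 (h g : ℝ → ℝ) (μ1 μ3 : ℝ) : ℝ := μ1 + (∫ t, h t) * μ3

/-- `ν₂ = μ₃ + ‖g‖_{L¹} μ₁`. -/
def nu2 (h g : ℝ → ℝ) (μ1 μ3 : ℝ) : ℝ := μ3 + (∫ t, g t) * μ1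

/-- The measure `δ₀ + (F + F̌ + F⋆F̌)(t) dt` on `ℝ`. -/
def rhoMeas (h g : ℝ → ℝ) : Measure ℝ :=
  Measure.dirac 0 + volume.withDensity fun t =>
    ENNReal.ofReal
      (Ffun h g t + Ffun h g (-t) + conv (Ffun h g) (fun s => Ffun h g (-s)) t)

/-- The measure `ν₁ δ₀ + ν₂ (h⋆ȟ)(t) dt` on `ℝ`. -/
def sigMeas11 (h g : ℝ → ℝ) (μ1 μ3 : ℝ) : Measure ℝ :=
  ENNReal.ofReal (nu1 h g μ1 μ3) • Measure.dirac 0 +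
    volume.withDensity fun t =>
      ENNReal.ofReal (nu2 h g μ1 μ3 * conv h (fun s => h (-s)) t)

/-- The measure `(ν₂ ȟ + ν₁ g)(t) dt` on `ℝ`. -/
def sigMeas12 (h g : ℝ → ℝ) (μ1 μ3 : ℝ) : Measure ℝ :=
  volume.withDensity fun t =>
    ENNReal.ofReal (nu2 h g μ1 μ3 * h (-t) + nu1 h g μ1 μ3 * g t)

/-- `γ_Δ(x) = (1 − |x|/Δ)⁺`. -/
def gamDelta (Δ x : ℝ) : ℝ := max (1 - |x| / Δ) 0

/-- `C₁₁(Δ,τ) = (2/(1−‖h‖₁‖g‖₁)) γ_Δ ⋆ (δ₀+F+F̌+F⋆F̌) ⋆ (ν₁δ₀ + ν₂ h⋆ȟ) (τ)`. -/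
def C11 (h g : ℝ → ℝ) (μ1 μ3 Δ τ : ℝ) : ℝ :=
  (2 / (1 - (∫ t, h t) * (∫ t, g t))) *
    ∫ x, (∫ y, gamDelta Δ (τ - x - y) ∂(sigMeas11 h g μ1 μ3)) ∂(rhoMeas h g)

/-- `C₁₂(Δ,τ) = (2/(1−‖h‖₁‖g‖₁)) γ_Δ ⋆ (δ₀+F+F̌+F⋆F̌) ⋆ (ν₂ ȟ + ν₁ g) (τ)`. -/
def C12 (h g : ℝ → ℝ) (μ1 μ3 Δ τ : ℝ) : ℝ :=
  (2 / (1 - (∫ t, h t) * (∫ t, g t))) *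
    ∫ x, (∫ y, gamDelta Δ (τ - x - y) ∂(sigMeas12 h g μ1 μ3)) ∂(rhoMeas h g)

/- ### Auxiliary lemmas -/

section Aux

open scoped Convolution ENNReal NNReal

lemma conv_nonneg' {f g : ℝ → ℝ} (hf : ∀ t, 0 ≤ f t) (hg : ∀ t, 0 ≤ g t) (t : ℝ) :
    0 ≤ conv f g t :=
  integral_nonneg fun s => mul_nonneg (hf _) (hg _)

lemma conv_measurable {f g : ℝ → ℝ} (hf : Measurable f) (hg : Measurable g) :
    Measurable (conv f g) := by
  have H : StronglyMeasurable fun p : ℝ × ℝ => f (p.1 - p.2) * g p.2 :=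
    ((hf.comp (measurable_fst.sub measurable_snd)).mul
      (hg.comp measurable_snd)).stronglyMeasurable
  exact H.integral_prod_right'.measurable

lemma conv_eq_convolution (f g : ℝ → ℝ) :
    conv f g = (g ⋆[ContinuousLinearMap.mul ℝ ℝ, volume] f) := by
  funext t
  simp only [conv, convolution, ContinuousLinearMap.mul_apply']
  exact integral_congr_ae (Eventually.of_forall fun s => mul_comm _ _)

lemma conv_integrable {f g : ℝ → ℝ} (hf : Integrable f) (hg : Integrable g) :
    Integrable (conv f g) := by
  rw [conv_eq_convolution]
  exact (hg.convolution_integrand (ContinuousLinearMap.mul ℝ ℝ) hf).integral_prod_left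

lemma integral_conv {f g : ℝ → ℝ} (hf : Integrable f) (hg : Integrable g) :
    ∫ t, conv f g t = (∫ t, f t) * (∫ t, g t) := by
  rw [conv_eq_convolution]
  rw [integral_convolution (ContinuousLinearMap.mul ℝ ℝ) hg hf]
  simp [mul_comm]

lemma convPow_nonneg {f : ℝ → ℝ} (hf : ∀ t, 0 ≤ f t) : ∀ n t, 0 ≤ convPow f n t
  | 0, t => hf t
  | (n + 1), t => conv_nonneg' hf (convPow_nonneg hf n) t

lemma convPow_measurable {f : ℝ → ℝ} (hf : Measurable f) : ∀ n, Measurable (convPow f n)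
  | 0 => hf
  | (n + 1) => conv_measurable hf (convPow_measurable hf n)

lemma convPow_integrable {f : ℝ → ℝ} (hf : Integrable f) : ∀ n, Integrable (convPow f n)
  | 0 => hf
  | (n + 1) => conv_integrable hf (convPow_integrable hf n)

lemma integral_convPow {f : ℝ → ℝ} (hf : Integrable f) :
    ∀ n, ∫ t, convPow f n t = (∫ t, f t) ^ (n + 1)
  | 0 => by simp [convPow]
  | (n + 1) => by
    rw [show convPow f (n + 1) = conv f (convPow f n) from rfl,
      integral_conv hf (convPow_integrable hf n), integral_convPow hf n]
    ring

lemma tsum_eq_toReal_tsum_ofReal {f : ℕ → ℝ} (hf : ∀ n, 0 ≤ f n) :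
    ∑' n, f n = (∑' n, ENNReal.ofReal (f n)).toReal := by
  by_cases hs : Summable f
  · rw [← ENNReal.ofReal_tsum_of_nonneg hf hs, ENNReal.toReal_ofReal (tsum_nonneg hf)]
  · rw [tsum_eq_zero_of_not_summable hs]
    have htop : (∑' n, ENNReal.ofReal (f n)) = ⊤ := by
      by_contra hfin
      apply hs
      have h1 : Summable fun n => (f n).toNNReal :=
        ENNReal.tsum_coe_ne_top_iff_summable.1 hfin
      have h2 : Summable fun n => ((f n).toNNReal : ℝ) := NNReal.summable_coe.2 h1
      refine h2.congr fun n => ?_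
      exact Real.coe_toNNReal _ (hf n)
    simp [htop]

variable {h g : ℝ → ℝ}

lemma Ffun_nonneg (hnonneg : ∀ t, 0 ≤ h t) (gnonneg : ∀ t, 0 ≤ g t) (t : ℝ) :
    0 ≤ Ffun h g t :=
  tsum_nonneg fun n => convPow_nonneg (conv_nonneg' hnonneg gnonneg) n t

lemma Ffun_eq_toReal (hnonneg : ∀ t, 0 ≤ h t) (gnonneg : ∀ t, 0 ≤ g t) (t : ℝ) :
    Ffun h g t = (∑' n, ENNReal.ofReal (convPow (conv h g) n t)).toReal :=
  tsum_eq_toReal_tsum_ofReal fun n => convPow_nonneg (conv_nonneg' hnonneg gnonneg) n t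

lemma Ffun_measurable (hmeas : Measurable h) (gmeas : Measurable g)
    (hnonneg : ∀ t, 0 ≤ h t) (gnonneg : ∀ t, 0 ≤ g t) :
    Measurable (Ffun h g) := by
  have heq : Ffun h g = fun t => (∑' n, ENNReal.ofReal (convPow (conv h g) n t)).toReal :=
    funext (Ffun_eq_toReal hnonneg gnonneg)
  rw [heq]
  exact (Measurable.ennreal_tsum fun n =>
    (convPow_measurable (conv_measurable hmeas gmeas) n).ennreal_ofReal).ennreal_toReal

lemma lintegral_tsum_convPow_lt_top (hmeas : Measurable h) (gmeas : Measurable g)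
    (hnonneg : ∀ t, 0 ≤ h t) (gnonneg : ∀ t, 0 ≤ g t)
    (hint : Integrable h) (gint : Integrable g)
    (hlt : (∫ t, h t) * (∫ t, g t) < 1) :
    (∫⁻ t, ∑' n, ENNReal.ofReal (convPow (conv h g) n t)) < ⊤ := by
  set r : ℝ≥0∞ := ENNReal.ofReal ((∫ t, h t) * (∫ t, g t)) with hr
  have hab : 0 ≤ (∫ t, h t) * (∫ t, g t) :=
    mul_nonneg (integral_nonneg hnonneg) (integral_nonneg gnonneg)
  have hk : Integrable (conv h g) := conv_integrable hint gint
  have key : ∀ n, (∫⁻ t, ENNReal.ofReal (convPow (conv h g) n t)) = r ^ (n + 1) := by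
    intro n
    rw [← ofReal_integral_eq_lintegral_ofReal (convPow_integrable hk n)
      (Eventually.of_forall fun t => convPow_nonneg (conv_nonneg' hnonneg gnonneg) n t)]
    rw [integral_convPow hk n, integral_conv hint gint, hr, ENNReal.ofReal_pow hab]
  rw [lintegral_tsum fun n =>
    ((convPow_measurable (conv_measurable hmeas gmeas) n).ennreal_ofReal).aemeasurable]
  simp_rw [key]
  have hr1 : r < 1 := ENNReal.ofReal_lt_one.2 hlt
  have hgeo : ∑' n : ℕ, r ^ (n + 1) = r * ∑' n : ℕ, r ^ n := by
    rw [← ENNReal.tsum_mul_left]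
    congr 1
    funext n
    rw [pow_succ, mul_comm]
  rw [hgeo, ENNReal.tsum_geometric]
  exact ENNReal.mul_lt_top ENNReal.ofReal_lt_top
    (ENNReal.inv_lt_top.2 (tsub_pos_iff_lt.2 hr1))

lemma Ffun_integrable (hmeas : Measurable h) (gmeas : Measurable g)
    (hnonneg : ∀ t, 0 ≤ h t) (gnonneg : ∀ t, 0 ≤ g t)
    (hint : Integrable h) (gint : Integrable g)
    (hlt : (∫ t, h t) * (∫ t, g t) < 1) :
    Integrable (Ffun h g) := by
  refine ⟨(Ffun_measurable hmeas gmeas hnonneg gnonneg).aestronglyMeasurable, ?_⟩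
  have hbound : ∀ t, (‖Ffun h g t‖₊ : ℝ≥0∞)
      ≤ ∑' n, ENNReal.ofReal (convPow (conv h g) n t) := by
    intro t
    rw [show (‖Ffun h g t‖₊ : ℝ≥0∞) = ‖Ffun h g t‖ₑ from rfl, Real.enorm_eq_ofReal (Ffun_nonneg hnonneg gnonneg t),
      Ffun_eq_toReal hnonneg gnonneg t]
    exact ENNReal.ofReal_toReal_le
  exact lt_of_le_of_lt (lintegral_mono hbound)
    (lintegral_tsum_convPow_lt_top hmeas gmeas hnonneg gnonneg hint gint hlt)

lemma isFiniteMeasure_withDensity_ofReal' {w : ℝ → ℝ} (hw : Integrable w) :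
    IsFiniteMeasure (volume.withDensity fun t => ENNReal.ofReal (w t)) := by
  constructor
  rw [withDensity_apply _ MeasurableSet.univ, Measure.restrict_univ]
  exact lt_of_le_of_lt (lintegral_mono fun t => Real.ofReal_le_enorm (w t)) hw.2

/- ### The triangular kernel -/

lemma gamDelta_nonneg (Δ x : ℝ) : 0 ≤ gamDelta Δ x := le_max_right _ _

lemma gamDelta_le_one {Δ : ℝ} (hΔ : 0 < Δ) (x : ℝ) : gamDelta Δ x ≤ 1 :=
  max_le (sub_le_self _ (div_nonneg (abs_nonneg x) hΔ.le)) zero_le_one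

lemma gamDelta_continuous (Δ : ℝ) : Continuous fun x => gamDelta Δ x :=
  (continuous_const.sub (continuous_abs.div_const Δ)).max continuous_const

lemma gamDelta_tendsto (x : ℝ) :
    Tendsto (fun Δ => gamDelta Δ x) (𝓝[>] (0 : ℝ)) (𝓝 (if x = 0 then 1 else 0)) := by
  by_cases hx : x = 0
  · subst hx
    simp only [if_pos rfl]
    have h1 : ∀ Δ : ℝ, gamDelta Δ 0 = 1 := fun Δ => by simp [gamDelta]
    exact tendsto_const_nhds.congr fun Δ => (h1 Δ).symm
  · simp only [if_neg hx]
    apply Tendsto.congr' _ tendsto_const_nhds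
    filter_upwards [Ioo_mem_nhdsGT_of_mem (left_mem_Ico.2 (abs_pos.2 hx))] with Δ hΔ
    have h1 : (1 : ℝ) ≤ |x| / Δ := (le_div_iff₀ hΔ.1).2 (by simpa using hΔ.2.le)
    exact (max_eq_right (by linarith)).symm

/- ### Dominated convergence -/

lemma inner_tendsto (σ : Measure ℝ) [IsFiniteMeasure σ] (z : ℝ) :
    Tendsto (fun Δ : ℝ => ∫ y, gamDelta Δ (z - y) ∂σ) (𝓝[>] 0) (𝓝 ((σ {z}).toReal)) := by
  have key : Tendsto (fun Δ : ℝ => ∫ y, gamDelta Δ (z - y) ∂σ) (𝓝[>] 0)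
      (𝓝 (∫ y, ({z} : Set ℝ).indicator 1 y ∂σ)) := by
    apply tendsto_integral_filter_of_dominated_convergence (bound := fun _ => (1 : ℝ))
    · exact Eventually.of_forall fun Δ =>
        ((gamDelta_continuous Δ).comp (continuous_const.sub continuous_id)).aestronglyMeasurable
    · filter_upwards [self_mem_nhdsWithin] with Δ hΔ
      refine Eventually.of_forall fun y => ?_
      rw [Real.norm_eq_abs, abs_of_nonneg (gamDelta_nonneg _ _)]
      exact gamDelta_le_one hΔ _
    · exact integrable_const _
    · refine Eventually.of_forall fun y => ?_
      have hlim := gamDelta_tendsto (z - y)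
      by_cases hy : y = z
      · subst hy
        simpa using hlim
      · have hz : z - y ≠ 0 := sub_ne_zero.2 (Ne.symm hy)
        simp only [if_neg hz] at hlim
        simpa [Set.indicator_apply, hy] using hlim
  rwa [integral_indicator_one (measurableSet_singleton z)] at key

lemma outer_tendsto (ρ σ : Measure ℝ) [IsFiniteMeasure ρ] [IsFiniteMeasure σ] (τ : ℝ) :
    Tendsto (fun Δ : ℝ => ∫ x, (∫ y, gamDelta Δ (τ - x - y) ∂σ) ∂ρ) (𝓝[>] 0)
      (𝓝 (∫ x, (σ {τ - x}).toReal ∂ρ)) := by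
  apply tendsto_integral_filter_of_dominated_convergence
    (bound := fun _ => (σ Set.univ).toReal)
  · refine Eventually.of_forall fun Δ => ?_
    have H : StronglyMeasurable fun p : ℝ × ℝ => gamDelta Δ (τ - p.1 - p.2) :=
      ((gamDelta_continuous Δ).comp
        ((continuous_const.sub continuous_fst).sub continuous_snd)).stronglyMeasurable
    exact H.integral_prod_right'.aestronglyMeasurable
  · filter_upwards [self_mem_nhdsWithin] with Δ hΔ
    refine Eventually.of_forall fun x => ?_
    calc ‖∫ y, gamDelta Δ (τ - x - y) ∂σ‖
        ≤ 1 * (σ Set.univ).toReal := by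
          apply norm_integral_le_of_norm_le_const
          refine Eventually.of_forall fun y => ?_
          rw [Real.norm_eq_abs, abs_of_nonneg (gamDelta_nonneg _ _)]
          exact gamDelta_le_one hΔ _
      _ = (σ Set.univ).toReal := one_mul _
  · exact integrable_const _
  · exact Eventually.of_forall fun x => inner_tendsto σ (τ - x)

end Aux

/-- **The Epps effect.** For every fixed `τ`, `C₁₂(Δ,τ) → 0` as `Δ → 0`, and
`C₁₁(Δ,τ) → (2ν₁/(1−‖h‖₁‖g‖₁)) 1_{τ=0}` as `Δ → 0`. -/
theorem epps_effect (h g : ℝ → ℝ)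
    (hmeas : Measurable h) (gmeas : Measurable g)
    (hnonneg : ∀ t, 0 ≤ h t) (gnonneg : ∀ t, 0 ≤ g t)
    (hint : Integrable h) (gint : Integrable g)
    (hvan : ∀ t < (0 : ℝ), h t = 0) (gvan : ∀ t < (0 : ℝ), g t = 0)
    (hlt : (∫ t, h t) * (∫ t, g t) < 1)
    (μ1 μ3 : ℝ) (hμ1 : 0 ≤ μ1) (hμ3 : 0 ≤ μ3) :
    ∀ τ : ℝ,
      Tendsto (fun Δ : ℝ => C12 h g μ1 μ3 Δ τ) (𝓝[>] 0) (𝓝 0) ∧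
      Tendsto (fun Δ : ℝ => C11 h g μ1 μ3 Δ τ) (𝓝[>] 0)
        (𝓝 ((2 * nu1 h g μ1 μ3 / (1 - (∫ t, h t) * (∫ t, g t))) *
          if τ = 0 then 1 else 0)) := by
  intro τ
  have ha : 0 ≤ ∫ t, h t := integral_nonneg hnonneg
  have hb : 0 ≤ ∫ t, g t := integral_nonneg gnonneg
  have hFint : Integrable (Ffun h g) :=
    Ffun_integrable hmeas gmeas hnonneg gnonneg hint gint hlt
  haveI hρfin : IsFiniteMeasure (rhoMeas h g) := by
    unfold rhoMeas
    haveI := isFiniteMeasure_withDensity_ofReal'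
      ((hFint.add hFint.comp_neg).add (conv_integrable hFint hFint.comp_neg))
    infer_instance
  haveI hσ11fin : IsFiniteMeasure (sigMeas11 h g μ1 μ3) := by
    unfold sigMeas11
    haveI h1 : IsFiniteMeasure (ENNReal.ofReal (nu1 h g μ1 μ3) • Measure.dirac (0 : ℝ)) := by
      constructor
      rw [Measure.smul_apply, measure_univ, smul_eq_mul, mul_one]
      exact ENNReal.ofReal_lt_top
    haveI := isFiniteMeasure_withDensity_ofReal'
      ((conv_integrable hint hint.comp_neg).const_mul (nu2 h g μ1 μ3))
    infer_instance
  haveI hσ12fin : IsFiniteMeasure (sigMeas12 h g μ1 μ3) := by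
    unfold sigMeas12
    exact isFiniteMeasure_withDensity_ofReal'
      ((hint.comp_neg.const_mul _).add (gint.const_mul _))
  have hν : 0 ≤ nu1 h g μ1 μ3 := add_nonneg hμ1 (mul_nonneg ha hμ3)
  constructor
  · -- C12
    have h12 := outer_tendsto (rhoMeas h g) (sigMeas12 h g μ1 μ3) τ
    have hz : ∀ x : ℝ, ((sigMeas12 h g μ1 μ3) {τ - x}).toReal = 0 := by
      intro x
      have : (sigMeas12 h g μ1 μ3) {τ - x} = 0 :=
        (withDensity_absolutelyContinuous volume _) (measure_singleton _)
      simp [this]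
    have hval : (∫ x, ((sigMeas12 h g μ1 μ3) {τ - x}).toReal ∂(rhoMeas h g)) = 0 := by
      simp [hz]
    rw [hval] at h12
    have := h12.const_mul (2 / (1 - (∫ t, h t) * (∫ t, g t)))
    simpa [C12] using this
  · -- C11
    have h11 := outer_tendsto (rhoMeas h g) (sigMeas11 h g μ1 μ3) τ
    have hsingle : ∀ x : ℝ, ((sigMeas11 h g μ1 μ3) {τ - x}).toReal
        = nu1 h g μ1 μ3 * ({τ} : Set ℝ).indicator 1 x := by
      intro x
      have hwd : (volume.withDensity fun t =>
          ENNReal.ofReal (nu2 h g μ1 μ3 * conv h (fun s => h (-s)) t)) {τ - x} = 0 :=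
        (withDensity_absolutelyContinuous volume _) (measure_singleton _)
      rw [sigMeas11, Measure.add_apply, hwd, add_zero, Measure.smul_apply,
        Measure.dirac_apply' _ (measurableSet_singleton (τ - x))]
      by_cases hx : x = τ
      · subst hx
        simp [ENNReal.toReal_ofReal hν, Set.indicator_apply]
      · have hne : τ - x ≠ 0 := sub_ne_zero.2 (fun hc => hx hc.symm)
        have h0 : (0 : ℝ) ∉ ({τ - x} : Set ℝ) := by
          simp [Set.mem_singleton_iff, Ne.symm hne]
        simp [Set.indicator_apply, h0, hx]
    have hval : (∫ x, ((sigMeas11 h g μ1 μ3) {τ - x}).toReal ∂(rhoMeas h g))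
        = nu1 h g μ1 μ3 * (if τ = 0 then 1 else 0) := by
      simp only [hsingle]
      rw [integral_const_mul, integral_indicator_one (measurableSet_singleton τ)]
      have hrho : (rhoMeas h g) {τ} = if τ = 0 then 1 else 0 := by
        rw [rhoMeas, Measure.add_apply,
          (withDensity_absolutelyContinuous volume _) (measure_singleton _), add_zero,
          Measure.dirac_apply' _ (measurableSet_singleton τ)]
        by_cases hτ : τ = 0
        · subst hτ; simp
        · simp [Set.indicator_apply, Set.mem_singleton_iff, Ne.symm hτ, hτ]
      rw [measureReal_def, hrho]
      by_cases hτ : τ = 0 <;> simp [hτ]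
    rw [hval] at h11
    have hgoal := h11.const_mul (2 / (1 - (∫ t, h t) * (∫ t, g t)))
    have heq : (2 * nu1 h g μ1 μ3 / (1 - (∫ t, h t) * (∫ t, g t))) *
        (if τ = 0 then (1 : ℝ) else 0)
        = (2 / (1 - (∫ t, h t) * (∫ t, g t))) *
          (nu1 h g μ1 μ3 * (if τ = 0 then 1 else 0)) := by ring
    rw [heq]
    exact hgoal
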